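/- Let μ, C, S, c be real numbers with K := C² + S² − μ² > 0 and μ ≠ S, and let α(t) = 2·arctan( (C − √K · tanh(√K·(t + c)/2)) / (μ − S) ). Then α(t) converges as t → ∞ to α∞ := 2·arctan( (C − √K)/(μ − S) ), and the limit is a fixed point: μ + S·cos α∞ − C·sin α∞ = 0. More generally, for each ε ∈ {−1, +1} the value 2·arctan( (C + ε·√K)/(μ − S) ) satisfies μ + S·cos α − C·sin α = 0. -/

import Mathlib

open Real Filter

lemma my_tanh_eq (x : ℝ) : Real.tanh x = 1 - 2 / (Real.exp (2*x) + 1) := by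
  have h1 : Real.exp x ≠ 0 := (Real.exp_pos x).ne'
  have h2 : Real.exp x + Real.exp (-x) ≠ 0 := by positivity
  have h3 : Real.exp (2*x) + 1 ≠ 0 := by positivity
  have hexp : Real.exp (2*x) = Real.exp x * Real.exp x := by
    rw [← Real.exp_add]; ring_nf
  rw [Real.tanh_eq_sinh_div_cosh, Real.sinh_eq, Real.cosh_eq, Real.exp_neg, hexp]
  have h4 : Real.exp x + (Real.exp x)⁻¹ ≠ 0 := by positivity
  have h5 : Real.exp x * Real.exp x + 1 ≠ 0 := by positivity
  field_simp
  ring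

lemma my_tendsto_tanh : Tendsto Real.tanh atTop (nhds 1) := by
  have h : Tendsto (fun x => 1 - 2 / (Real.exp (2*x) + 1)) atTop (nhds 1) := by
    have : Tendsto (fun x : ℝ => Real.exp (2*x) + 1) atTop atTop :=
      (Real.tendsto_exp_atTop.comp (tendsto_id.const_mul_atTop two_pos)).atTop_add
        tendsto_const_nhds
    have := Tendsto.div_atTop (tendsto_const_nhds (x := (2:ℝ))) this
    simpa using tendsto_const_nhds.sub this
  exact h.congr (fun x => (my_tanh_eq x).symm)

lemma fp (μ C S : ℝ) (u : ℝ) (hu : (μ-S)*u^2 - 2*C*u + (μ+S) = 0) :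
    μ + S * Real.cos (2 * Real.arctan u) - C * Real.sin (2 * Real.arctan u) = 0 := by
  have hpos : (0:ℝ) < 1 + u^2 := by positivity
  have hs : Real.sqrt (1 + u^2) ^ 2 = 1 + u^2 := Real.sq_sqrt hpos.le
  have hcos : Real.cos (2 * Real.arctan u) = (1 - u^2) / (1 + u^2) := by
    rw [Real.cos_two_mul, Real.cos_arctan]
    rw [div_pow, one_pow, hs]
    field_simp
    ring
  have hsin : Real.sin (2 * Real.arctan u) = 2*u / (1 + u^2) := by
    have hsne : Real.sqrt (1 + u^2) ≠ 0 := by positivity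
    rw [Real.sin_two_mul, Real.sin_arctan, Real.cos_arctan]
    have hss : Real.sqrt (1 + u^2) * Real.sqrt (1 + u^2) = 1 + u^2 := Real.mul_self_sqrt hpos.le
    rw [mul_one_div, mul_div_assoc, div_div, hss, mul_div_assoc]
  rw [hcos, hsin]
  field_simp
  linarith [hu]

theorem tanh_solution_limit_fixed_point (μ C S c : ℝ)
    (hK : 0 < C ^ 2 + S ^ 2 - μ ^ 2) (hμS : μ ≠ S)
    (α : ℝ → ℝ)
    (hα : ∀ t, α t = 2 * Real.arctan
      ((C - Real.sqrt (C ^ 2 + S ^ 2 - μ ^ 2) *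
        Real.tanh (Real.sqrt (C ^ 2 + S ^ 2 - μ ^ 2) * (t + c) / 2)) / (μ - S))) :
    Filter.Tendsto α Filter.atTop
      (nhds (2 * Real.arctan ((C - Real.sqrt (C ^ 2 + S ^ 2 - μ ^ 2)) / (μ - S)))) ∧
    (μ + S * Real.cos (2 * Real.arctan ((C - Real.sqrt (C ^ 2 + S ^ 2 - μ ^ 2)) / (μ - S)))
       - C * Real.sin (2 * Real.arctan ((C - Real.sqrt (C ^ 2 + S ^ 2 - μ ^ 2)) / (μ - S)))
      = 0) ∧
    (∀ ε : ℝ, ε = -1 ∨ ε = 1 →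
      μ + S * Real.cos (2 * Real.arctan ((C + ε * Real.sqrt (C ^ 2 + S ^ 2 - μ ^ 2)) / (μ - S)))
        - C * Real.sin (2 * Real.arctan ((C + ε * Real.sqrt (C ^ 2 + S ^ 2 - μ ^ 2)) / (μ - S)))
      = 0) := by
  set K := C ^ 2 + S ^ 2 - μ ^ 2 with hKdef
  have hμS' : μ - S ≠ 0 := sub_ne_zero.mpr hμS
  have hsK : Real.sqrt K ^ 2 = K := Real.sq_sqrt hK.le
  have hsKpos : 0 < Real.sqrt K := Real.sqrt_pos.mpr hK
  have hfp : ∀ ε : ℝ, ε = -1 ∨ ε = 1 →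
      μ + S * Real.cos (2 * Real.arctan ((C + ε * Real.sqrt K) / (μ - S)))
        - C * Real.sin (2 * Real.arctan ((C + ε * Real.sqrt K) / (μ - S))) = 0 := by
    intro ε hε
    apply fp
    have hε2 : ε^2 = 1 := by rcases hε with h | h <;> simp [h]
    have key : (μ-S)*((C + ε * Real.sqrt K)/(μ-S))^2 - 2*C*((C + ε * Real.sqrt K)/(μ-S)) + (μ+S)
        = ((C + ε * Real.sqrt K)^2 - 2*C*(C + ε * Real.sqrt K) + (μ+S)*(μ-S))/(μ-S) := by
      field_simp
    rw [key, div_eq_zero_iff]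
    left
    linear_combination ε^2 * hsK + (C^2 + S^2 - μ^2) * hε2
  refine ⟨?_, ?_, hfp⟩
  · have h1 : Tendsto (fun t : ℝ => Real.sqrt K * (t + c) / 2) atTop atTop := by
      apply Tendsto.atTop_div_const (by norm_num)
      exact (tendsto_atTop_add_const_right _ c tendsto_id).const_mul_atTop hsKpos
    have h2 : Tendsto (fun t : ℝ => Real.tanh (Real.sqrt K * (t + c) / 2)) atTop (nhds 1) :=
      my_tendsto_tanh.comp h1
    have h3 : Tendsto (fun t : ℝ => (C - Real.sqrt K * Real.tanh (Real.sqrt K * (t + c) / 2)) / (μ - S))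
        atTop (nhds ((C - Real.sqrt K) / (μ - S))) := by
      have := ((h2.const_mul (Real.sqrt K)).const_sub C).div_const (μ - S)
      simpa using this
    have h4 := ((Real.continuous_arctan.tendsto _).comp h3).const_mul 2
    refine h4.congr' ?_
    filter_upwards with t
    simp [hα t, Function.comp]
  · have := hfp (-1) (Or.inl rfl)
    simpa [← sub_eq_add_neg] using this
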